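/- Let h : ℝⁿ → ℝ be differentiable with L-Lipschitz gradient and strongly quasiconvex with modulus γ > 0, with unique minimizer x̄ and h* = h(x̄). Fix η > 1, 0 < β < γ/(ηL²), μ₁ = 1/(1+β(γ-ηβL²)), μ₂ = (1-1/η)/(1+β(γ-ηβL²)), ε ∈ (0, 1/μ₁ - 1), and suppose α + θL ≤ μ₁μ₂(1+ε)/(μ₁μ₂(1+ε) + μ₁ + μ₁/ε + μ₂) with α ∈ [0,1], θ ≥ 0. Define E_k := ‖x_k - x̄‖² + μ₂(1 - (α+θL))‖x_k - x_{k-1}‖² for the Nesterov-type iteration y_k = x_k + α(x_k - x_{k-1}) - θ(∇h(x_k) - ∇h(x_{k-1})), x_{k+1} = y_k - β∇h(y_k). Then E_{k+1} ≤ μ₁(1+ε)E_k for all k ≥ 1, and since μ₁(1+ε) ∈ (0,1), the sequence {x_k} converges linearly to x̄: ‖x_k - x̄‖² ≤ (μ₁(1+ε))^{k-1} E_1. -/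

import Mathlib

open InnerProductSpace

lemma grad_zero_at_min {n : ℕ} (h : EuclideanSpace ℝ (Fin n) → ℝ)
    (g : EuclideanSpace ℝ (Fin n)) (xbar : EuclideanSpace ℝ (Fin n))
    (hgrad : HasGradientAt h g xbar) (hmin : ∀ x, h xbar ≤ h x) : g = 0 := by
  have hloc : IsLocalMin h xbar := Filter.Eventually.of_forall hmin
  have h0 := hloc.hasFDerivAt_eq_zero hgrad.hasFDerivAt
  exact (toDual ℝ (EuclideanSpace ℝ (Fin n))).injective (h0.trans (map_zero _).symm)

lemma inner_grad_lower {n : ℕ} (h : EuclideanSpace ℝ (Fin n) → ℝ)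
    (gz : EuclideanSpace ℝ (Fin n)) (γ : ℝ)
    (xbar z : EuclideanSpace ℝ (Fin n))
    (hgrad : HasGradientAt h gz z)
    (hsq : ∀ lam : ℝ, lam ∈ Set.Icc (0:ℝ) 1 →
      h (lam • xbar + (1 - lam) • z) ≤
        max (h xbar) (h z) - lam * (1 - lam) * (γ / 2) * ‖z - xbar‖ ^ 2)
    (hmin : h xbar ≤ h z) :
    γ / 2 * ‖z - xbar‖ ^ 2 ≤ inner ℝ gz (z - xbar) := by
  set C : ℝ := γ / 2 * ‖z - xbar‖ ^ 2 with hC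
  set φ : ℝ → ℝ := fun t => h (z + t • (xbar - z)) with hφdef
  have hline : HasDerivAt (fun t : ℝ => z + t • (xbar - z)) (xbar - z) 0 := by
    have := ((hasDerivAt_id (0:ℝ)).smul_const (xbar - z)).const_add z
    simpa using this
  have hφ : HasDerivAt φ (inner ℝ gz (xbar - z) : ℝ) 0 := by
    have hf : HasFDerivAt h ((toDual ℝ (EuclideanSpace ℝ (Fin n))) gz)
        (z + (0:ℝ) • (xbar - z)) := by simpa using hgrad.hasFDerivAt
    have := hf.comp_hasDerivAt 0 hline
    simp only [toDual_apply_apply] at this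
    exact this
  have hslope : ∀ t ∈ Set.Ioc (0:ℝ) 1, slope φ 0 t ≤ -(1 - t) * C := by
    intro t ht
    have h1 := hsq t ⟨le_of_lt ht.1, ht.2⟩
    have heq : t • xbar + (1 - t) • z = z + t • (xbar - z) := by module
    have hmax : max (h xbar) (h z) = h z := max_eq_right hmin
    rw [heq, hmax] at h1
    have hφ0 : φ 0 = h z := by simp [φ]
    have hCeq : -(t * ((1 - t) * C)) = -(t * (1 - t) * (γ / 2) * ‖z - xbar‖ ^ 2) := by
      rw [hC]; ring
    have hdiff : φ t - φ 0 ≤ -(t * ((1 - t) * C)) := by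
      rw [hφ0, hCeq]; show h (z + t • (xbar - z)) - h z ≤ _
      linarith [h1]
    rw [slope_def_field, sub_zero, div_le_iff₀ ht.1]
    calc φ t - φ 0 ≤ -(t * ((1-t) * C)) := hdiff
      _ = -(1-t) * C * t := by ring
  -- limit
  have htend : Filter.Tendsto (slope φ 0) (nhdsWithin 0 (Set.Ioi 0)) (nhds (inner ℝ gz (xbar - z) : ℝ)) := by
    have := hasDerivAt_iff_tendsto_slope.mp hφ
    exact this.mono_left (nhdsWithin_mono _ (fun s hs => Set.mem_compl_singleton_iff.mpr (ne_of_gt hs)))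
  have htend2 : Filter.Tendsto (fun t : ℝ => -(1 - t) * C) (nhdsWithin 0 (Set.Ioi 0)) (nhds (-C)) := by
    have : Filter.Tendsto (fun t : ℝ => -(1 - t) * C) (nhds 0) (nhds (-(1 - 0) * C)) := by
      apply Filter.Tendsto.mul_const
      exact ((continuous_const.sub continuous_id).neg).tendsto 0
    simpa using this.mono_left nhdsWithin_le_nhds
  have hlim : (inner ℝ gz (xbar - z) : ℝ) ≤ -C := by
    refine le_of_tendsto_of_tendsto htend htend2 ?_
    filter_upwards [Ioc_mem_nhdsGT_of_mem (Set.mem_Ico.mpr ⟨le_refl (0:ℝ), one_pos⟩)] with t ht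
    exact hslope t ht
  have hin : (inner ℝ gz (z - xbar) : ℝ) = -(inner ℝ gz (xbar - z) : ℝ) := by
    rw [← neg_sub, inner_neg_right]
  rw [hin]; linarith [hlim]
set_option maxHeartbeats 1000000 in
theorem nesterov_hessian_linear_convergence
    {n : ℕ} (h : EuclideanSpace ℝ (Fin n) → ℝ)
    (g : EuclideanSpace ℝ (Fin n) → EuclideanSpace ℝ (Fin n))
    (hgrad : ∀ x, HasGradientAt h (g x) x)
    (L : ℝ) (hL : 0 < L) (hLip : ∀ x y, ‖g x - g y‖ ≤ L * ‖x - y‖)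
    (γ : ℝ) (hγ : 0 < γ)
    (hsq : ∀ x y : EuclideanSpace ℝ (Fin n), ∀ lam : ℝ, lam ∈ Set.Icc (0:ℝ) 1 →
      h (lam • y + (1 - lam) • x) ≤
        max (h y) (h x) - lam * (1 - lam) * (γ / 2) * ‖x - y‖ ^ 2)
    (xbar : EuclideanSpace ℝ (Fin n)) (hmin : ∀ x, h xbar ≤ h x)
    (η β : ℝ) (hη : 1 < η) (hβ : 0 < β) (hβ' : β < γ / (η * L ^ 2))
    (μ₁ μ₂ : ℝ) (hμ₁ : μ₁ = 1 / (1 + β * (γ - η * β * L ^ 2)))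
    (hμ₂ : μ₂ = (1 - 1 / η) / (1 + β * (γ - η * β * L ^ 2)))
    (ε : ℝ) (hε : 0 < ε) (hε' : ε < 1 / μ₁ - 1)
    (α θ : ℝ) (hα : α ∈ Set.Icc (0:ℝ) 1) (hθ : 0 ≤ θ)
    (hαθ : α + θ * L ≤ μ₁ * μ₂ * (1 + ε) / (μ₁ * μ₂ * (1 + ε) + μ₁ + μ₁ / ε + μ₂))
    (x y : ℕ → EuclideanSpace ℝ (Fin n))
    (hy : ∀ k, y (k + 1) = x (k + 1) + α • (x (k + 1) - x k) - θ • (g (x (k + 1)) - g (x k)))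
    (hx : ∀ k, x (k + 2) = y (k + 1) - β • g (y (k + 1)))
    (E : ℕ → ℝ)
    (hE : ∀ k, E k = ‖x (k + 1) - xbar‖ ^ 2
        + μ₂ * (1 - (α + θ * L)) * ‖x (k + 1) - x k‖ ^ 2) :
    (∀ k, E (k + 1) ≤ μ₁ * (1 + ε) * E k) ∧ (0 < μ₁ * (1 + ε) ∧ μ₁ * (1 + ε) < 1) ∧
      ∀ k, ‖x (k + 1) - xbar‖ ^ 2 ≤ (μ₁ * (1 + ε)) ^ k * E 0 := by
  have hη0 : (0:ℝ) < η := lt_trans one_pos hη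
  have hL2 : (0:ℝ) < η * L ^ 2 := by positivity
  have hβγ : η * β * L ^ 2 < γ := by
    have := (lt_div_iff₀ hL2).mp hβ'
    nlinarith only [this]
  have hDpos : (0:ℝ) < 1 + β * (γ - η * β * L ^ 2) := by nlinarith only [hβγ, hβ]
  have hμ₁pos : 0 < μ₁ := by rw [hμ₁]; exact div_pos one_pos hDpos
  have hinvη : 1 / η < 1 := by rw [div_lt_one hη0]; exact hη
  have hμ₂pos : 0 < μ₂ := by
    rw [hμ₂]; apply div_pos _ hDpos; linarith
  have hμ₁D : μ₁ * (1 + β * (γ - η * β * L ^ 2)) = 1 := by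
    rw [hμ₁, div_mul_cancel₀]; exact ne_of_gt hDpos
  have hμ₂D : μ₂ * (1 + β * (γ - η * β * L ^ 2)) = 1 - 1 / η := by
    rw [hμ₂, div_mul_cancel₀]; exact ne_of_gt hDpos
  set τ : ℝ := α + θ * L with hτdef
  have hτ0 : 0 ≤ τ := by
    have h1 : 0 ≤ θ * L := mul_nonneg hθ hL.le
    have h2 := hα.1
    simp only [hτdef]; linarith
  set M : ℝ := μ₁ * μ₂ * (1 + ε) with hM
  have hMpos : 0 < M := by
    apply mul_pos (mul_pos hμ₁pos hμ₂pos); linarith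
  have hden : 0 < M + μ₁ + μ₁ / ε + μ₂ := by positivity
  have hcond : τ * (M + μ₁ + μ₁ / ε + μ₂) ≤ M := (le_div_iff₀ hden).mp hαθ
  have hτ1 : τ < 1 := by
    by_contra hcon
    push_neg at hcon
    have h1 : 1 * (M + μ₁ + μ₁ / ε + μ₂) ≤ τ * (M + μ₁ + μ₁ / ε + μ₂) :=
      mul_le_mul_of_nonneg_right hcon hden.le
    rw [one_mul] at h1
    have h2 : 0 < μ₁ + μ₁ / ε + μ₂ := by positivity
    linarith
  clear_value τ M
  have gbar : g xbar = 0 := grad_zero_at_min h (g xbar) xbar (hgrad xbar) hmin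
  have hgnorm : ∀ z, ‖g z‖ ≤ L * ‖z - xbar‖ := by
    intro z
    have := hLip z xbar
    rwa [gbar, sub_zero] at this
  have hinner : ∀ z, γ / 2 * ‖z - xbar‖ ^ 2 ≤ inner ℝ (g z) (z - xbar) := fun z =>
    inner_grad_lower h (g z) γ xbar z (hgrad z) (fun lam hlam => hsq z xbar lam hlam) (hmin z)
  -- Key one-step estimate (i)
  have key : ∀ k, ‖x (k + 2) - xbar‖ ^ 2 + μ₂ * ‖x (k + 2) - y (k + 1)‖ ^ 2
      ≤ μ₁ * ‖y (k + 1) - xbar‖ ^ 2 := by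
    intro k
    have hxz : x (k + 2) - y (k + 1) = -(β • g (y (k + 1))) := by rw [hx k]; abel
    have hxz' : x (k + 2) - xbar = (y (k + 1) - xbar) - β • g (y (k + 1)) := by
      rw [hx k]; abel
    have hb : ‖x (k + 2) - y (k + 1)‖ ^ 2 = β ^ 2 * ‖g (y (k + 1))‖ ^ 2 := by
      rw [hxz, norm_neg, norm_smul, Real.norm_eq_abs, abs_of_pos hβ, mul_pow]
    have hc : ‖x (k + 2) - xbar‖ ^ 2 = ‖y (k + 1) - xbar‖ ^ 2
        - 2 * (β * inner ℝ (g (y (k + 1))) (y (k + 1) - xbar))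
        + β ^ 2 * ‖g (y (k + 1))‖ ^ 2 := by
      rw [hxz', @norm_sub_sq_real, real_inner_smul_right, real_inner_comm,
        norm_smul, Real.norm_eq_abs, abs_of_pos hβ, mul_pow]
    have hIβ := mul_le_mul_of_nonneg_left (hinner (y (k + 1))) hβ.le
    have hgn := hgnorm (y (k + 1))
    have hg2 : ‖g (y (k + 1))‖ ^ 2 ≤ L ^ 2 * ‖y (k + 1) - xbar‖ ^ 2 := by
      nlinarith only [hgn, norm_nonneg (g (y (k + 1))), norm_nonneg (y (k + 1) - xbar), hL]
    have hg2' := mul_le_mul_of_nonneg_left hg2 (sq_nonneg β)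
    have hβL : β * L ^ 2 ≤ γ := by
      have hp1 : 0 ≤ (η - 1) * β * L ^ 2 :=
        mul_nonneg (mul_nonneg (by linarith) hβ.le) (sq_nonneg L)
      nlinarith only [hp1, hβγ]
    have ha0 : (0:ℝ) ≤ ‖y (k + 1) - xbar‖ ^ 2 := sq_nonneg _
    have t0 : 0 ≤ β * (γ - β * L ^ 2) * ‖y (k + 1) - xbar‖ ^ 2 :=
      mul_nonneg (mul_nonneg hβ.le (by linarith)) ha0
    have hca : ‖x (k + 2) - xbar‖ ^ 2 ≤ ‖y (k + 1) - xbar‖ ^ 2 := by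
      nlinarith only [hc, hIβ, hg2', t0]
    have hcc : ‖x (k + 2) - xbar‖ ^ 2 ≤ ‖y (k + 1) - xbar‖ ^ 2
        - β * γ * ‖y (k + 1) - xbar‖ ^ 2 + β ^ 2 * ‖g (y (k + 1))‖ ^ 2 := by
      nlinarith only [hc, hIβ]
    have t2 : 0 ≤ (β * γ - η * β ^ 2 * L ^ 2)
        * (‖y (k + 1) - xbar‖ ^ 2 - ‖x (k + 2) - xbar‖ ^ 2) := by
      apply mul_nonneg _ (by linarith)
      nlinarith only [hβγ, hβ]
    have t3 : 0 ≤ (2 - 1 / η)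
        * (β ^ 2 * (L ^ 2 * ‖y (k + 1) - xbar‖ ^ 2) - β ^ 2 * ‖g (y (k + 1))‖ ^ 2) := by
      apply mul_nonneg (by linarith) (by linarith [hg2'])
    have t4 : 0 ≤ (η - 2 + 1 / η) * (β ^ 2 * L ^ 2 * ‖y (k + 1) - xbar‖ ^ 2) := by
      apply mul_nonneg _ (by positivity)
      have h1 : 0 ≤ (η - 1) ^ 2 / η := by positivity
      have h2 : (η - 1) ^ 2 / η = η - 2 + 1 / η := by field_simp; ring
      linarith
    have hgoal : (‖x (k + 2) - xbar‖ ^ 2 + μ₂ * ‖x (k + 2) - y (k + 1)‖ ^ 2)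
        * (1 + β * (γ - η * β * L ^ 2)) ≤ ‖y (k + 1) - xbar‖ ^ 2 := by
      have hexp : (‖x (k + 2) - xbar‖ ^ 2 + μ₂ * ‖x (k + 2) - y (k + 1)‖ ^ 2)
          * (1 + β * (γ - η * β * L ^ 2))
          = ‖x (k + 2) - xbar‖ ^ 2 * (1 + β * (γ - η * β * L ^ 2))
            + (μ₂ * (1 + β * (γ - η * β * L ^ 2))) * ‖x (k + 2) - y (k + 1)‖ ^ 2 := by
        ring
      rw [hexp, hμ₂D, hb]
      nlinarith only [hcc, t2, t3, t4]
    have h9 := mul_le_mul_of_nonneg_left hgoal hμ₁pos.le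
    have h10 : μ₁ * ((‖x (k + 2) - xbar‖ ^ 2 + μ₂ * ‖x (k + 2) - y (k + 1)‖ ^ 2)
        * (1 + β * (γ - η * β * L ^ 2)))
        = (‖x (k + 2) - xbar‖ ^ 2 + μ₂ * ‖x (k + 2) - y (k + 1)‖ ^ 2)
          * (μ₁ * (1 + β * (γ - η * β * L ^ 2))) := by ring
    rw [h10, hμ₁D, mul_one] at h9
    exact h9
  -- coefficient inequality
  have hττ : τ ^ 2 ≤ τ := by nlinarith only [hτ0, hτ1]
  have hcoef : μ₁ * (1 + 1 / ε) * τ ^ 2 + μ₂ * τ ≤ μ₁ * (1 + ε) * μ₂ * (1 - τ) := by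
    have h1 : μ₁ * (1 + 1 / ε) * τ ^ 2 ≤ (μ₁ + μ₁ / ε) * τ := by
      have he : μ₁ * (1 + 1 / ε) = μ₁ + μ₁ / ε := by ring
      rw [he]
      apply mul_le_mul_of_nonneg_left hττ
      positivity
    have h2 : (μ₁ + μ₁ / ε + μ₂) * τ ≤ M * (1 - τ) := by nlinarith only [hcond]
    have hMM : μ₁ * (1 + ε) * μ₂ = M := by rw [hM]; ring
    rw [hMM]
    linarith
  -- the recursion
  have hrec : ∀ k, E (k + 1) ≤ μ₁ * (1 + ε) * E k := by
    intro k
    set u := x (k + 2) - x (k + 1) with hu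
    set v := x (k + 1) - x k with hv
    set s := α • v - θ • (g (x (k + 1)) - g (x k)) with hs
    clear_value u v s
    have hys : y (k + 1) = x (k + 1) + s := by rw [hy k, hs, hv]; abel
    have hw : x (k + 2) - y (k + 1) = u - s := by rw [hys, hu]; abel
    have hp : y (k + 1) - xbar = (x (k + 1) - xbar) + s := by rw [hys]; abel
    have hsn : ‖s‖ ≤ τ * ‖v‖ := by
      calc ‖s‖ = ‖α • v - θ • (g (x (k + 1)) - g (x k))‖ := by rw [hs]
        _ ≤ ‖α • v‖ + ‖θ • (g (x (k + 1)) - g (x k))‖ := norm_sub_le _ _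
        _ = α * ‖v‖ + θ * ‖g (x (k + 1)) - g (x k)‖ := by
            rw [norm_smul, norm_smul, Real.norm_eq_abs, Real.norm_eq_abs,
              abs_of_nonneg hα.1, abs_of_nonneg hθ]
        _ ≤ α * ‖v‖ + θ * (L * ‖x (k + 1) - x k‖) := by
            have := mul_le_mul_of_nonneg_left (hLip (x (k + 1)) (x k)) hθ
            linarith
        _ = τ * ‖v‖ := by rw [hτdef, hv]; ring
    have hexp2 : ‖u - s‖ ^ 2 = ‖u‖ ^ 2 - 2 * inner ℝ u s + ‖s‖ ^ 2 := by
      exact @norm_sub_sq_real _ _ _ _ _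
    have hin2 := real_inner_le_norm u s
    have hns : ‖u‖ * ‖s‖ ≤ ‖u‖ * (τ * ‖v‖) :=
      mul_le_mul_of_nonneg_left hsn (norm_nonneg u)
    have hq2 : 0 ≤ τ * (‖u‖ - ‖v‖) ^ 2 := mul_nonneg hτ0 (sq_nonneg _)
    have hii : (1 - τ) * ‖u‖ ^ 2 - τ * ‖v‖ ^ 2 ≤ ‖u - s‖ ^ 2 := by
      nlinarith only [hexp2, hin2, hns, hq2, sq_nonneg ‖s‖]
    have hs2 : ‖s‖ ^ 2 ≤ τ ^ 2 * ‖v‖ ^ 2 := by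
      nlinarith only [hsn, norm_nonneg s, mul_nonneg hτ0 (norm_nonneg v)]
    have hexp3 : ‖(x (k + 1) - xbar) + s‖ ^ 2
        = ‖x (k + 1) - xbar‖ ^ 2 + 2 * inner ℝ (x (k + 1) - xbar) s + ‖s‖ ^ 2 := by
      exact @norm_add_sq_real _ _ _ _ _
    have hin3 := real_inner_le_norm (x (k + 1) - xbar) s
    have hy2 : 2 * (‖x (k + 1) - xbar‖ * ‖s‖)
        ≤ ε * ‖x (k + 1) - xbar‖ ^ 2 + (1 / ε) * ‖s‖ ^ 2 := by
      have hq := sq_nonneg (ε * ‖x (k + 1) - xbar‖ - ‖s‖)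
      have key2 : ε * (ε * ‖x (k + 1) - xbar‖ ^ 2 + (1 / ε) * ‖s‖ ^ 2
          - 2 * (‖x (k + 1) - xbar‖ * ‖s‖)) = (ε * ‖x (k + 1) - xbar‖ - ‖s‖) ^ 2 := by
        field_simp; ring
      nlinarith only [hq, key2, hε]
    have hfrac : (0:ℝ) ≤ 1 + 1 / ε := by positivity
    have hs2' := mul_le_mul_of_nonneg_left hs2 hfrac
    have hiii : ‖y (k + 1) - xbar‖ ^ 2 ≤ (1 + ε) * ‖x (k + 1) - xbar‖ ^ 2
        + (1 + 1 / ε) * (τ ^ 2 * ‖v‖ ^ 2) := by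
      rw [hp]
      linarith only [hexp3, hin3, hy2, hs2']
    have hkey := key k
    rw [hw] at hkey
    have hE1 := hE (k + 1)
    have hE0 := hE k
    simp only [show k + 1 + 1 = k + 2 from rfl] at hE1
    rw [← hu] at hE1
    rw [← hv] at hE0
    have hii' := mul_le_mul_of_nonneg_left hii hμ₂pos.le
    have hiii' := mul_le_mul_of_nonneg_left hiii hμ₁pos.le
    have hcoef' := mul_le_mul_of_nonneg_right hcoef (sq_nonneg ‖v‖)
    rw [hE1, hE0]
    linarith only [hkey, hii', hiii', hcoef']
  have hq1 : 0 < μ₁ * (1 + ε) := by positivity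
  have hq2 : μ₁ * (1 + ε) < 1 := by
    have h1 : 1 + ε < 1 / μ₁ := by linarith
    have h2 := mul_lt_mul_of_pos_left h1 hμ₁pos
    rwa [mul_one_div, div_self (ne_of_gt hμ₁pos)] at h2
  refine ⟨hrec, ⟨hq1, hq2⟩, ?_⟩
  have hnn : ∀ k, ‖x (k + 1) - xbar‖ ^ 2 ≤ E k := by
    intro k
    rw [hE k]
    have : 0 ≤ μ₂ * (1 - τ) * ‖x (k + 1) - x k‖ ^ 2 := by
      apply mul_nonneg (mul_nonneg hμ₂pos.le (by linarith)) (sq_nonneg _)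
    linarith
  have hEk : ∀ k, E k ≤ (μ₁ * (1 + ε)) ^ k * E 0 := by
    intro k
    induction k with
    | zero => simp
    | succ m ih =>
      calc E (m + 1) ≤ μ₁ * (1 + ε) * E m := hrec m
        _ ≤ μ₁ * (1 + ε) * ((μ₁ * (1 + ε)) ^ m * E 0) :=
            mul_le_mul_of_nonneg_left ih hq1.le
        _ = (μ₁ * (1 + ε)) ^ (m + 1) * E 0 := by ring
  intro k
  exact le_trans (hnn k) (hEk k)
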